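/- arXiv:1809.04666 — 2 statements merged into one kernel-verified Lean document; each statement's English description precedes it below -/
import Mathlib

section
/- Let 1 ≤ k < n be integers. There exist constants L₁, L₂ > 0 depending only on n and k such that for every P ∈ ℋ, the parametrizing map f_P : ℝ^k → P, f_P(t) = (t, g_P(t)), satisfies L₁|t − t′| ≤ |f_P(t) − f_P(t′)| ≤ L₂|t − t′| for all t, t′ ∈ ℝ^k; in particular f_P is bi-Lipschitz with universally bounded constants. -/
open MeasureTheory Set
open scoped ENNReal

noncomputable section

/-- The closed unit cube `[0,1]ⁿ`. -/
def unitCube (n : ℕ) : Set (EuclideanSpace ℝ (Fin n)) :=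
  {x | ∀ i, x i ∈ Set.Icc (0 : ℝ) 1}

/-- The `(n-k)`-dimensional affine subspaces `H₀ = V₀^⊥` (for `i = 0`) and
`H_i = e_i + H₀` (for `i = 1, …, k`), where `V₀` is the span of the first `k`
standard basis vectors. -/
def Hplane (n k : ℕ) (i : Fin (k + 1)) : Set (EuclideanSpace ℝ (Fin n)) :=
  {x | ∀ j : Fin n, (j : ℕ) < k → x j = if (j : ℕ) + 1 = (i : ℕ) then 1 else 0}

/-- Membership in `ℋ`: the set `S ⊆ ℝⁿ` meets each `H_i`, `i = 0, 1, …, k`,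
in exactly one point, and this point lies in `[0,1]ⁿ`. -/
def MemH (n k : ℕ) (S : Set (EuclideanSpace ℝ (Fin n))) : Prop :=
  ∀ i : Fin (k + 1), ∃ x ∈ unitCube n, S ∩ Hplane n k i = {x}

/-- The orthogonal projection `proj₀` of `ℝⁿ` onto `V₀`, the span of the first `k`
standard basis vectors. -/
def proj0 (n k : ℕ) (x : EuclideanSpace ℝ (Fin n)) : EuclideanSpace ℝ (Fin n) :=
  WithLp.toLp 2 fun j => if (j : ℕ) < k then x j else 0

/-- The point of `ℝⁿ = ℝ^k × ℝ^{n-k}` with first `k` coordinates given by `u` and the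
remaining `n - k` coordinates given by `v`. -/
def glue (n k : ℕ) (u : Fin k → ℝ) (v : Fin (n - k) → ℝ) : EuclideanSpace ℝ (Fin n) :=
  WithLp.toLp 2 fun i => if h : (i : ℕ) < k then u ⟨i, h⟩ else v ⟨(i : ℕ) - k, by have := i.isLt; omega⟩

/-- The affine map `g(t) = a⁰ + t₁ b¹ + ⋯ + t_k b^k : ℝ^k → ℝ^{n-k}` with coefficients
`a : Fin (n-k) → ℝ` and `b : Fin k → Fin (n-k) → ℝ`. -/
def gmap (n k : ℕ) (a : Fin (n - k) → ℝ) (b : Fin k → Fin (n - k) → ℝ)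
    (t : Fin k → ℝ) : Fin (n - k) → ℝ :=
  fun j => a j + ∑ i, t i * b i j

/-- The `k`-plane `{(t, g(t)) : t ∈ ℝ^k} ⊆ ℝⁿ`, the graph of the affine map with
coefficients (code) `(a, b)`. -/
def graphSet (n k : ℕ) (a : Fin (n - k) → ℝ) (b : Fin k → Fin (n - k) → ℝ) :
    Set (EuclideanSpace ℝ (Fin n)) :=
  Set.range fun t : Fin k → ℝ => glue n k t (gmap n k a b t)

lemma glue_lo (n k : ℕ) (u : Fin k → ℝ) (v : Fin (n - k) → ℝ) (i : Fin n) (h : (i : ℕ) < k) :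
    glue n k u v i = u ⟨i, h⟩ := by
  simp [glue, h]

lemma glue_hi (n k : ℕ) (u : Fin k → ℝ) (v : Fin (n - k) → ℝ) (j : Fin (n - k))
    (h : k + (j : ℕ) < n) : glue n k u v ⟨k + j, h⟩ = v j := by
  simp only [glue]
  rw [dif_neg (by omega)]
  exact congrArg v (Fin.ext (by simp))

theorem stmt15 (n k : ℕ) (hk : 1 ≤ k) (hkn : k < n) :
    ∃ L₁ L₂ : ℝ, 0 < L₁ ∧ 0 < L₂ ∧
      ∀ (a : Fin (n - k) → ℝ) (b : Fin k → Fin (n - k) → ℝ),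
        MemH n k (graphSet n k a b) →
        ∀ t t' : EuclideanSpace ℝ (Fin k),
          L₁ * dist t t' ≤
            dist (glue n k t (gmap n k a b t)) (glue n k t' (gmap n k a b t')) ∧
          dist (glue n k t (gmap n k a b t)) (glue n k t' (gmap n k a b t')) ≤
            L₂ * dist t t' := by
  have hnk : k + (n - k) = n := by omega
  refine ⟨1, Real.sqrt (1 + ((n - k : ℕ) : ℝ) * (k : ℝ)), one_pos,
    Real.sqrt_pos.mpr (by positivity), ?_⟩
  intro a b hH t t'
  -- Step 1: a j ∈ [0,1]
  have ha : ∀ j : Fin (n - k), a j ∈ Set.Icc (0 : ℝ) 1 := by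
    intro j
    obtain ⟨x, hxc, hxs⟩ := hH 0
    have hp : glue n k 0 (gmap n k a b 0) ∈ graphSet n k a b ∩ Hplane n k 0 := by
      refine ⟨⟨0, rfl⟩, ?_⟩
      intro jj hjj
      rw [glue_lo n k _ _ jj hjj]
      simp
    rw [hxs] at hp
    have := hxc ⟨k + j, by omega⟩
    rw [← hp, glue_hi n k _ _ j (by omega)] at this
    simpa [gmap] using this
  -- Step 2: a j + b i j ∈ [0,1]
  have hab : ∀ (i : Fin k) (j : Fin (n - k)), a j + b i j ∈ Set.Icc (0 : ℝ) 1 := by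
    intro i₀ j
    obtain ⟨x, hxc, hxs⟩ := hH i₀.succ
    set e : Fin k → ℝ := fun i => if i = i₀ then 1 else 0 with he
    have hp : glue n k e (gmap n k a b e) ∈ graphSet n k a b ∩ Hplane n k i₀.succ := by
      refine ⟨⟨e, rfl⟩, ?_⟩
      intro jj hjj
      rw [glue_lo n k _ _ jj hjj]
      simp only [he, Fin.val_succ]
      by_cases hcase : (jj : ℕ) = (i₀ : ℕ)
      · have h1 : (⟨(jj : ℕ), hjj⟩ : Fin k) = i₀ := Fin.ext hcase
        rw [if_pos h1, if_pos (by omega)]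
      · have h1 : (⟨(jj : ℕ), hjj⟩ : Fin k) ≠ i₀ :=
          fun hcon => hcase (by simpa using congrArg Fin.val hcon)
        rw [if_neg h1, if_neg (by omega)]
    rw [hxs] at hp
    have := hxc ⟨k + j, by omega⟩
    rw [← hp, glue_hi n k _ _ j (by omega)] at this
    simpa [gmap, he] using this
  have hb2 : ∀ (i : Fin k) (j : Fin (n - k)), (b i j) ^ 2 ≤ 1 := by
    intro i j
    obtain ⟨h1, h2⟩ := ha j
    obtain ⟨h3, h4⟩ := hab i j
    nlinarith
  -- notation
  set s : Fin k → ℝ := fun i => t i - t' i with hs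
  set A : ℝ := ∑ i : Fin k, s i ^ 2 with hA
  set B : ℝ := ∑ j : Fin (n - k), (∑ i : Fin k, s i * b i j) ^ 2 with hB
  have hA0 : 0 ≤ A := Finset.sum_nonneg fun _ _ => sq_nonneg _
  have hB0 : 0 ≤ B := Finset.sum_nonneg fun _ _ => sq_nonneg _
  have hdt : dist t t' = Real.sqrt A := by
    rw [EuclideanSpace.dist_eq]
    congr 1
    exact Finset.sum_congr rfl fun i _ => by rw [Real.dist_eq, sq_abs]
  -- the key sum identity
  have hsum : (∑ i : Fin n,
      (glue n k t (gmap n k a b t) i - glue n k t' (gmap n k a b t') i) ^ 2) = A + B := by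
    set f : Fin n → ℝ := fun i =>
      (glue n k t (gmap n k a b t) i - glue n k t' (gmap n k a b t') i) ^ 2 with hf
    calc ∑ i : Fin n, f i
        = ∑ i : Fin (k + (n - k)), f (finCongr hnk i) :=
          (Fintype.sum_equiv (finCongr hnk) _ _ fun i => rfl).symm
      _ = (∑ i : Fin k, f (finCongr hnk (Fin.castAdd _ i)))
          + ∑ j : Fin (n - k), f (finCongr hnk (Fin.natAdd k j)) := Fin.sum_univ_add _
      _ = A + B := by
          congr 1
          · refine Finset.sum_congr rfl fun i _ => ?_
            have hv : ((finCongr hnk (Fin.castAdd _ i) : Fin n) : ℕ) = (i : ℕ) := rfl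
            simp only [hf]
            rw [glue_lo n k _ _ _ (hv ▸ i.isLt), glue_lo n k _ _ _ (hv ▸ i.isLt)]
            congr 2
          · refine Finset.sum_congr rfl fun j _ => ?_
            have hfc : (finCongr hnk (Fin.natAdd k j) : Fin n)
                = ⟨k + (j : ℕ), by omega⟩ := rfl
            simp only [hf, hfc]
            rw [glue_hi n k _ _ j (by omega), glue_hi n k _ _ j (by omega)]
            simp only [gmap]
            congr 1
            rw [add_sub_add_left_eq_sub, ← Finset.sum_sub_distrib]
            exact Finset.sum_congr rfl fun i _ => by simp only [hs]; ring
  have hdX : dist (glue n k t (gmap n k a b t)) (glue n k t' (gmap n k a b t'))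
      = Real.sqrt (A + B) := by
    rw [EuclideanSpace.dist_eq, ← hsum]
    congr 1
    exact Finset.sum_congr rfl fun i _ => by rw [Real.dist_eq, sq_abs]
  constructor
  · rw [one_mul, hdt, hdX]
    exact Real.sqrt_le_sqrt (by linarith)
  · rw [hdt, hdX, ← Real.sqrt_mul (by positivity : (0:ℝ) ≤ 1 + ((n - k : ℕ) : ℝ) * (k : ℝ)) A]
    apply Real.sqrt_le_sqrt
    have hBle : B ≤ ((n - k : ℕ) * k : ℝ) * A := by
      rw [hB]
      calc ∑ j : Fin (n - k), (∑ i : Fin k, s i * b i j) ^ 2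
          ≤ ∑ j : Fin (n - k), A * (k : ℝ) := by
            refine Finset.sum_le_sum fun j _ => ?_
            calc (∑ i : Fin k, s i * b i j) ^ 2
                ≤ (∑ i : Fin k, s i ^ 2) * (∑ i : Fin k, b i j ^ 2) :=
                  Finset.sum_mul_sq_le_sq_mul_sq _ _ _
              _ ≤ A * (k : ℝ) := by
                  refine mul_le_mul_of_nonneg_left ?_ hA0
                  calc ∑ i : Fin k, b i j ^ 2 ≤ ∑ _i : Fin k, (1 : ℝ) :=
                        Finset.sum_le_sum fun i _ => hb2 i j
                    _ = (k : ℝ) := by simp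
        _ = ((n - k : ℕ) * k : ℝ) * A := by
            rw [Finset.sum_const]
            simp [Finset.card_univ]
            ring
    nlinarith
end
end

section
/- Let 1 ≤ k < n be integers. There exists a constant K′ > 0 depending only on n and k such that for every P, P′ ∈ ℋ, m(P, P′) ≤ K′ · ‖x(P) − x(P′)‖, where m is the metric m(P, P′) = ‖π_{V} − π_{V′}‖_op + |a − a′| for P = V + a, P′ = V′ + a′ with V, V′ k-dimensional linear subspaces and a ∈ V^⊥, a′ ∈ (V′)^⊥. -/
open MeasureTheory Set
open scoped ENNReal

noncomputable section

/-- The orthogonal projection onto a linear subspace `V ⊆ ℝⁿ`, as a continuous linear map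
of the ambient space. -/
def projCLM {n : ℕ} (V : Submodule ℝ (EuclideanSpace ℝ (Fin n))) :
    EuclideanSpace ℝ (Fin n) →L[ℝ] EuclideanSpace ℝ (Fin n) :=
  V.subtypeL.comp (V.orthogonalProjection)

/-- The direction of the graph plane with code `(a, b)`: the span of the vectors
`(e_i, b^i)`, `i = 1, …, k`. -/
def dirSpan (n k : ℕ) (b : Fin k → Fin (n - k) → ℝ) :
    Submodule ℝ (EuclideanSpace ℝ (Fin n)) :=
  Submodule.span ℝ (Set.range fun i : Fin k => glue n k (Pi.single i 1) (b i))

/-- The point `(0, a⁰) = (0, g(0))` of the graph plane with code `(a, b)`. -/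
def basePt (n k : ℕ) (a : Fin (n - k) → ℝ) (b : Fin k → Fin (n - k) → ℝ) :
    EuclideanSpace ℝ (Fin n) :=
  glue n k 0 (gmap n k a b 0)

variable {n k : ℕ}


lemma glue_sub (u u' : Fin k → ℝ) (v v' : Fin (n-k) → ℝ) :
    glue n k u v - glue n k u' v' = glue n k (u - u') (v - v') := by
  ext i
  show glue n k u v i - glue n k u' v' i = _
  unfold glue; simp only [PiLp.toLp_apply]
  split <;> simp

lemma norm_glue_le {u : Fin k → ℝ} {v : Fin (n-k) → ℝ} {c : ℝ} (hc : 0 ≤ c)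
    (hu : ∀ i, |u i| ≤ c) (hv : ∀ j, |v j| ≤ c) :
    ‖glue n k u v‖ ≤ Real.sqrt n * c := by
  rw [EuclideanSpace.norm_eq]
  have h1 : ∑ i : Fin n, ‖glue n k u v i‖ ^ 2 ≤ (n : ℝ) * c ^ 2 := by
    calc ∑ i : Fin n, ‖glue n k u v i‖ ^ 2 ≤ ∑ _i : Fin n, c ^ 2 := by
          apply Finset.sum_le_sum
          intro i _
          have : |glue n k u v i| ≤ c := by
            unfold glue; simp only [PiLp.toLp_apply]; split
            · exact hu _
            · exact hv _
          calc ‖glue n k u v i‖ ^ 2 = |glue n k u v i| ^ 2 := by rw [Real.norm_eq_abs]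
            _ ≤ c ^ 2 := by nlinarith [abs_nonneg (glue n k u v i)]
      _ = (n : ℝ) * c ^ 2 := by simp [mul_comm]
  calc Real.sqrt (∑ i : Fin n, ‖glue n k u v i‖ ^ 2) ≤ Real.sqrt ((n : ℝ) * c ^ 2) :=
        Real.sqrt_le_sqrt h1
    _ = Real.sqrt n * c := by
        rw [Real.sqrt_mul (Nat.cast_nonneg n), Real.sqrt_sq hc]

lemma norm_le_norm_glue (hkn : k ≤ n) (t : EuclideanSpace ℝ (Fin k)) (v : Fin (n-k) → ℝ) :
    ‖t‖ ≤ ‖glue n k t v‖ := by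
  rw [EuclideanSpace.norm_eq, EuclideanSpace.norm_eq]
  apply Real.sqrt_le_sqrt
  have : ∑ i : Fin k, ‖t i‖ ^ 2 =
      ∑ j ∈ Finset.univ.map (Fin.castLEEmb hkn), ‖glue n k t v j‖ ^ 2 := by
    rw [Finset.sum_map]
    apply Finset.sum_congr rfl
    intro i _
    congr 1
    show ‖t i‖ = ‖glue n k t v (Fin.castLE hkn i)‖
    unfold glue; simp only [PiLp.toLp_apply]
    rw [dif_pos (by simp [i.isLt] : ((Fin.castLE hkn i : Fin n) : ℕ) < k)]
    simp
  rw [this]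
  apply Finset.sum_le_sum_of_subset_of_nonneg (Finset.subset_univ _)
  intro j _ _
  positivity

lemma coord_le_norm (t : EuclideanSpace ℝ (Fin k)) (i : Fin k) : |t i| ≤ ‖t‖ := by
  rw [EuclideanSpace.norm_eq]
  have h : |t i| = Real.sqrt (‖t i‖ ^ 2) := by
    rw [Real.sqrt_sq_eq_abs, Real.norm_eq_abs, abs_abs]
  rw [h]
  apply Real.sqrt_le_sqrt
  exact Finset.single_le_sum (f := fun j => ‖t j‖ ^ 2) (fun j _ => by positivity)
    (Finset.mem_univ i)

def Bv (n k : ℕ) (b : Fin k → Fin (n - k) → ℝ) (i : Fin k) : EuclideanSpace ℝ (Fin n) :=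
  glue n k (Pi.single i 1) (b i)

def Bclm (n k : ℕ) (b : Fin k → Fin (n - k) → ℝ) :
    EuclideanSpace ℝ (Fin k) →L[ℝ] EuclideanSpace ℝ (Fin n) :=
  LinearMap.toContinuousLinearMap
  { toFun := fun t => ∑ i, t i • Bv n k b i
    map_add' := by
      intro s t
      simp only [PiLp.add_apply, add_smul, Finset.sum_add_distrib]
    map_smul' := by
      intro c t
      simp only [PiLp.smul_apply, smul_eq_mul, RingHom.id_apply, Finset.smul_sum, smul_smul] }

lemma Bclm_apply (b : Fin k → Fin (n - k) → ℝ) (t : EuclideanSpace ℝ (Fin k)) :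
    Bclm n k b t = ∑ i, t i • Bv n k b i := rfl

lemma Bclm_apply_coord (b : Fin k → Fin (n - k) → ℝ) (t : EuclideanSpace ℝ (Fin k))
    (w : Fin n) : Bclm n k b t w = ∑ i, t i * Bv n k b i w := by
  rw [Bclm_apply, WithLp.ofLp_sum]
  exact Finset.sum_apply w Finset.univ _

lemma Bclm_single (b : Fin k → Fin (n - k) → ℝ) (i : Fin k) :
    Bclm n k b (WithLp.toLp 2 (Pi.single i 1)) = Bv n k b i := by
  rw [Bclm_apply, Finset.sum_eq_single i]
  · simp
  · intro j _ hj
    simp [Pi.single_eq_of_ne hj]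
  · simp

lemma Bclm_apply_glue (b : Fin k → Fin (n - k) → ℝ) (t : EuclideanSpace ℝ (Fin k)) :
    Bclm n k b t = glue n k t (fun j => ∑ i, t i * b i j) := by
  ext w
  rw [Bclm_apply_coord]
  unfold Bv glue; simp only [PiLp.toLp_apply]
  split
  next h =>
    simp only [Pi.single_apply]
    rw [Finset.sum_congr rfl (fun i _ => by rw [mul_ite, mul_one, mul_zero])]
    simp
  next h => rfl

lemma norm_Bv_le {b : Fin k → Fin (n-k) → ℝ} (hb : ∀ i j, |b i j| ≤ 1) (i : Fin k) :
    ‖Bv n k b i‖ ≤ Real.sqrt n := by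
  have := norm_glue_le (u := Pi.single i (1:ℝ)) (v := b i) (c := 1) zero_le_one
    (fun j => by rw [Pi.single_apply]; split <;> simp) (fun j => hb i j)
  simpa [Bv] using this

lemma norm_Bclm_apply_le {b : Fin k → Fin (n-k) → ℝ} (hb : ∀ i j, |b i j| ≤ 1)
    (t : EuclideanSpace ℝ (Fin k)) : ‖Bclm n k b t‖ ≤ (k * Real.sqrt n) * ‖t‖ := by
  rw [Bclm_apply]
  calc ‖∑ i, t i • Bv n k b i‖ ≤ ∑ i, ‖t i • Bv n k b i‖ := norm_sum_le _ _
    _ ≤ ∑ _i : Fin k, ‖t‖ * Real.sqrt n := by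
        apply Finset.sum_le_sum
        intro i _
        rw [norm_smul, Real.norm_eq_abs]
        exact mul_le_mul (coord_le_norm t i) (norm_Bv_le hb i) (norm_nonneg _) (norm_nonneg _)
    _ = (k * Real.sqrt n) * ‖t‖ := by simp; ring
  
lemma norm_Bclm_le {b : Fin k → Fin (n-k) → ℝ} (hb : ∀ i j, |b i j| ≤ 1) :
    ‖Bclm n k b‖ ≤ k * Real.sqrt n :=
  ContinuousLinearMap.opNorm_le_bound _ (by positivity) (norm_Bclm_apply_le hb)

lemma Bv_sub (b b' : Fin k → Fin (n-k) → ℝ) (i : Fin k) :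
    Bv n k b i - Bv n k b' i = glue n k 0 (b i - b' i) := by
  rw [Bv, Bv, glue_sub, sub_self]

lemma norm_Bclm_sub_le {b b' : Fin k → Fin (n-k) → ℝ} {r : ℝ} (hr : 0 ≤ r)
    (hd : ∀ i j, |b i j - b' i j| ≤ r) :
    ‖Bclm n k b - Bclm n k b'‖ ≤ (k * Real.sqrt n) * r := by
  apply ContinuousLinearMap.opNorm_le_bound _ (by positivity)
  intro t
  have key : (Bclm n k b - Bclm n k b') t = ∑ i, t i • (Bv n k b i - Bv n k b' i) := by
    rw [ContinuousLinearMap.sub_apply, Bclm_apply, Bclm_apply, ← Finset.sum_sub_distrib]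
    exact Finset.sum_congr rfl fun i _ => (smul_sub _ _ _).symm
  rw [key]
  calc ‖∑ i, t i • (Bv n k b i - Bv n k b' i)‖ ≤ ∑ i, ‖t i • (Bv n k b i - Bv n k b' i)‖ :=
        norm_sum_le _ _
    _ ≤ ∑ _i : Fin k, ‖t‖ * (Real.sqrt n * r) := by
        apply Finset.sum_le_sum
        intro i _
        rw [norm_smul, Real.norm_eq_abs, Bv_sub]
        refine mul_le_mul (coord_le_norm t i) ?_ (norm_nonneg _) (norm_nonneg _)
        exact norm_glue_le hr (fun j => by simpa using hr) (fun j => hd i j)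
    _ = (k * Real.sqrt n) * r * ‖t‖ := by simp; ring
        
lemma norm_le_Bclm (hkn : k ≤ n) (b : Fin k → Fin (n-k) → ℝ) (t : EuclideanSpace ℝ (Fin k)) :
    ‖t‖ ≤ ‖Bclm n k b t‖ := by
  rw [Bclm_apply_glue]; exact norm_le_norm_glue hkn t _

def Mclm (n k : ℕ) (b : Fin k → Fin (n - k) → ℝ) :
    EuclideanSpace ℝ (Fin k) →L[ℝ] EuclideanSpace ℝ (Fin k) :=
  (ContinuousLinearMap.adjoint (Bclm n k b)).comp (Bclm n k b)

lemma norm_le_Mclm (hkn : k ≤ n) (b : Fin k → Fin (n-k) → ℝ) (t : EuclideanSpace ℝ (Fin k)) :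
    ‖t‖ ≤ ‖Mclm n k b t‖ := by
  have h1 : inner ℝ (Mclm n k b t) t = ‖Bclm n k b t‖ ^ 2 := by
    show inner ℝ (ContinuousLinearMap.adjoint (Bclm n k b) (Bclm n k b t)) t = _
    rw [ContinuousLinearMap.adjoint_inner_left, real_inner_self_eq_norm_sq]
  have h2 : ‖t‖ ^ 2 ≤ ‖Bclm n k b t‖ ^ 2 := by
    have := norm_le_Bclm hkn b t
    nlinarith [norm_nonneg t]
  have h3 : inner ℝ (Mclm n k b t) t ≤ ‖Mclm n k b t‖ * ‖t‖ := real_inner_le_norm _ _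
  nlinarith [norm_nonneg t, norm_nonneg (Mclm n k b t)]

lemma Mclm_injective (hkn : k ≤ n) (b : Fin k → Fin (n-k) → ℝ) :
    Function.Injective (Mclm n k b) := by
  intro s t h
  have h0 : Mclm n k b (s - t) = 0 := by rw [map_sub, h, sub_self]
  have := norm_le_Mclm hkn b (s - t)
  rw [h0, norm_zero] at this
  have : s - t = 0 := norm_le_zero_iff.mp this
  exact sub_eq_zero.mp this

def Meqv (hkn : k ≤ n) (b : Fin k → Fin (n - k) → ℝ) :
    EuclideanSpace ℝ (Fin k) ≃ₗ[ℝ] EuclideanSpace ℝ (Fin k) :=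
  LinearEquiv.ofInjectiveEndo (Mclm n k b).toLinearMap (Mclm_injective hkn b)

def Nclm (hkn : k ≤ n) (b : Fin k → Fin (n - k) → ℝ) :
    EuclideanSpace ℝ (Fin k) →L[ℝ] EuclideanSpace ℝ (Fin k) :=
  ↑((Meqv hkn b).toContinuousLinearEquiv.symm)

lemma Mclm_Nclm (hkn : k ≤ n) (b : Fin k → Fin (n - k) → ℝ) (y : EuclideanSpace ℝ (Fin k)) :
    Mclm n k b (Nclm hkn b y) = y := by
  have : Nclm hkn b y = (Meqv hkn b).symm y := rfl
  rw [this]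
  exact (Meqv hkn b).apply_symm_apply y

lemma Nclm_Mclm (hkn : k ≤ n) (b : Fin k → Fin (n - k) → ℝ) (t : EuclideanSpace ℝ (Fin k)) :
    Nclm hkn b (Mclm n k b t) = t := by
  have : Nclm hkn b (Mclm n k b t) = (Meqv hkn b).symm ((Meqv hkn b) t) := rfl
  rw [this]
  exact (Meqv hkn b).symm_apply_apply t

lemma norm_Nclm_le (hkn : k ≤ n) (b : Fin k → Fin (n - k) → ℝ) :
    ‖Nclm hkn b‖ ≤ 1 := by
  apply ContinuousLinearMap.opNorm_le_bound _ zero_le_one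
  intro y
  rw [one_mul]
  have := norm_le_Mclm hkn b (Nclm hkn b y)
  rwa [Mclm_Nclm] at this

lemma mem_dirSpan_Bclm (b : Fin k → Fin (n - k) → ℝ) (t : EuclideanSpace ℝ (Fin k)) :
    Bclm n k b t ∈ dirSpan n k b := by
  rw [Bclm_apply]
  exact Submodule.sum_smul_mem _ _ (fun i _ => Submodule.subset_span ⟨i, rfl⟩)

lemma proj_formula (hkn : k ≤ n) (b : Fin k → Fin (n - k) → ℝ) :
    projCLM (dirSpan n k b) =
      (Bclm n k b) ∘L (Nclm hkn b) ∘L (ContinuousLinearMap.adjoint (Bclm n k b)) := by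
  refine ContinuousLinearMap.ext fun x => ?_
  show (dirSpan n k b).starProjection x =
    Bclm n k b (Nclm hkn b (ContinuousLinearMap.adjoint (Bclm n k b) x))
  set F := fun y : EuclideanSpace ℝ (Fin n) =>
    Bclm n k b (Nclm hkn b (ContinuousLinearMap.adjoint (Bclm n k b) y)) with hF
  apply Submodule.eq_starProjection_of_mem_of_inner_eq_zero
  · exact mem_dirSpan_Bclm b _
  · intro w hw
    have hBs : ∀ s : EuclideanSpace ℝ (Fin k), inner ℝ (x - F x) (Bclm n k b s) = 0 := by
      intro s
      rw [inner_sub_left]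
      have e1 : inner ℝ x (Bclm n k b s) =
          inner ℝ (ContinuousLinearMap.adjoint (Bclm n k b) x) s :=
        (ContinuousLinearMap.adjoint_inner_left _ _ _).symm
      have e2 : inner ℝ (F x) (Bclm n k b s) =
          inner ℝ (ContinuousLinearMap.adjoint (Bclm n k b) (F x)) s :=
        (ContinuousLinearMap.adjoint_inner_left _ _ _).symm
      have e3 : ContinuousLinearMap.adjoint (Bclm n k b) (F x) =
          ContinuousLinearMap.adjoint (Bclm n k b) x := by
        show Mclm n k b (Nclm hkn b (ContinuousLinearMap.adjoint (Bclm n k b) x)) = _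
        exact Mclm_Nclm hkn b _
      rw [e1, e2, e3, sub_self]
    refine Submodule.span_induction ?_ ?_ ?_ ?_ hw
    · rintro w ⟨i, rfl⟩
      have : (fun i : Fin k => glue n k (Pi.single i 1) (b i)) i = Bclm n k b (WithLp.toLp 2 (Pi.single i 1)) := by
        rw [Bclm_single]; rfl
      rw [this]
      exact hBs _
    · exact inner_zero_right _
    · intro y z _ _ hy hz
      rw [inner_add_right, hy, hz, add_zero]
    · intro c y _ hy
      rw [real_inner_smul_right, hy, mul_zero]

lemma gmap_zero (a : Fin (n-k) → ℝ) (b : Fin k → Fin (n-k) → ℝ) :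
    gmap n k a b 0 = a := by
  funext j; simp [gmap]

lemma basePt_eq (a : Fin (n-k) → ℝ) (b : Fin k → Fin (n-k) → ℝ) :
    basePt n k a b = glue n k 0 a := by rw [basePt, gmap_zero]

lemma glue_coord_hi (u : Fin k → ℝ) (v : Fin (n-k) → ℝ) (j : Fin (n-k)) :
    glue n k u v ⟨k + (j:ℕ), by have := j.isLt; omega⟩ = v j := by
  unfold glue; simp only [PiLp.toLp_apply]
  rw [dif_neg (show ¬(((⟨k + (j:ℕ), by have := j.isLt; omega⟩ : Fin n)) : ℕ) < k by
    simp only [Fin.val_mk]; omega)]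
  congr 1
  exact Fin.ext (by simp)

lemma memH_cube (a : Fin (n-k) → ℝ) (b : Fin k → Fin (n-k) → ℝ)
    (h : MemH n k (graphSet n k a b)) (i : Fin (k+1)) (t : Fin k → ℝ)
    (ht : glue n k t (gmap n k a b t) ∈ Hplane n k i) :
    glue n k t (gmap n k a b t) ∈ unitCube n := by
  obtain ⟨x, hx, hset⟩ := h i
  have hpt : glue n k t (gmap n k a b t) ∈ graphSet n k a b ∩ Hplane n k i :=
    ⟨⟨t, rfl⟩, ht⟩
  rw [hset] at hpt
  rw [hpt]
  exact hx

lemma memH_a_bound (a : Fin (n-k) → ℝ) (b : Fin k → Fin (n-k) → ℝ)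
    (h : MemH n k (graphSet n k a b)) (j : Fin (n-k)) : a j ∈ Set.Icc (0:ℝ) 1 := by
  have ht : glue n k 0 (gmap n k a b 0) ∈ Hplane n k 0 := by
    intro w hw
    unfold glue; simp only [PiLp.toLp_apply]
    rw [dif_pos hw]
    simp
  have := memH_cube a b h 0 0 ht ⟨k + (j:ℕ), by have := j.isLt; omega⟩
  rw [gmap_zero] at this
  rwa [glue_coord_hi] at this

lemma gmap_single (a : Fin (n-k) → ℝ) (b : Fin k → Fin (n-k) → ℝ) (i : Fin k) :
    gmap n k a b (Pi.single i 1) = fun j => a j + b i j := by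
  funext j
  unfold gmap
  congr 1
  rw [Finset.sum_eq_single i]
  · simp
  · intro l _ hl
    rw [Pi.single_eq_of_ne hl, zero_mul]
  · simp

lemma memH_ab_bound (a : Fin (n-k) → ℝ) (b : Fin k → Fin (n-k) → ℝ)
    (h : MemH n k (graphSet n k a b)) (i : Fin k) (j : Fin (n-k)) :
    a j + b i j ∈ Set.Icc (0:ℝ) 1 := by
  have ht : glue n k (Pi.single i 1) (gmap n k a b (Pi.single i 1)) ∈ Hplane n k i.succ := by
    intro w hw
    unfold glue; simp only [PiLp.toLp_apply]
    rw [dif_pos hw]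
    rw [Pi.single_apply]
    have : ((⟨(w:ℕ), hw⟩ : Fin k) = i) ↔ ((w:ℕ) + 1 = (i.succ : ℕ)) := by
      rw [Fin.ext_iff, Fin.val_succ]
      have hval : ((⟨(w:ℕ), hw⟩ : Fin k) : ℕ) = (w:ℕ) := rfl
      rw [hval]
      omega
    simp only [this]
  have := memH_cube a b h i.succ (Pi.single i 1) ht ⟨k + (j:ℕ), by have := j.isLt; omega⟩
  rw [glue_coord_hi, gmap_single] at this
  exact this


lemma opnorm_comp_le' {E F G : Type*} [NormedAddCommGroup E] [NormedAddCommGroup F]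
    [NormedAddCommGroup G] [NormedSpace ℝ E] [NormedSpace ℝ F] [NormedSpace ℝ G]
    (A : F →L[ℝ] G) (B : E →L[ℝ] F) {cA cB : ℝ} (hA : ‖A‖ ≤ cA) (hB : ‖B‖ ≤ cB) :
    ‖A ∘L B‖ ≤ cA * cB :=
  le_trans (ContinuousLinearMap.opNorm_comp_le A B)
    (mul_le_mul hA hB (norm_nonneg _) (le_trans (norm_nonneg _) hA))

lemma Mclm_sub (b b' : Fin k → Fin (n-k) → ℝ) :
    Mclm n k b' - Mclm n k b =
      (ContinuousLinearMap.adjoint (Bclm n k b') - ContinuousLinearMap.adjoint (Bclm n k b))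
          ∘L Bclm n k b'
        + (ContinuousLinearMap.adjoint (Bclm n k b)) ∘L (Bclm n k b' - Bclm n k b) := by
  refine ContinuousLinearMap.ext fun x => ?_
  simp only [Mclm, ContinuousLinearMap.sub_apply, ContinuousLinearMap.add_apply,
    ContinuousLinearMap.comp_apply, map_sub]
  abel

lemma Nclm_sub (hkn : k ≤ n) (b b' : Fin k → Fin (n-k) → ℝ) :
    Nclm hkn b - Nclm hkn b' =
      (Nclm hkn b) ∘L ((Mclm n k b' - Mclm n k b) ∘L (Nclm hkn b')) := by
  refine ContinuousLinearMap.ext fun x => ?_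
  simp only [ContinuousLinearMap.sub_apply, ContinuousLinearMap.comp_apply, map_sub]
  rw [Mclm_Nclm hkn b' x, Nclm_Mclm hkn b (Nclm hkn b' x)]

lemma Q_sub (hkn : k ≤ n) (b b' : Fin k → Fin (n-k) → ℝ) :
    (Bclm n k b) ∘L (Nclm hkn b) ∘L (ContinuousLinearMap.adjoint (Bclm n k b))
      - (Bclm n k b') ∘L (Nclm hkn b') ∘L (ContinuousLinearMap.adjoint (Bclm n k b')) =
    (Bclm n k b - Bclm n k b') ∘L ((Nclm hkn b) ∘L (ContinuousLinearMap.adjoint (Bclm n k b)))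
      + (Bclm n k b') ∘L ((Nclm hkn b - Nclm hkn b')
          ∘L (ContinuousLinearMap.adjoint (Bclm n k b)))
      + ((Bclm n k b') ∘L (Nclm hkn b'))
          ∘L (ContinuousLinearMap.adjoint (Bclm n k b)
              - ContinuousLinearMap.adjoint (Bclm n k b')) := by
  refine ContinuousLinearMap.ext fun x => ?_
  simp only [ContinuousLinearMap.sub_apply, ContinuousLinearMap.add_apply,
    ContinuousLinearMap.comp_apply, map_sub]
  abel

theorem stmt16 (n k : ℕ) (hk : 1 ≤ k) (hkn : k < n) :
    ∃ K' : ℝ, 0 < K' ∧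
      ∀ (a a' : Fin (n - k) → ℝ) (b b' : Fin k → Fin (n - k) → ℝ),
        MemH n k (graphSet n k a b) → MemH n k (graphSet n k a' b') →
        ∀ r : ℝ,
          (∀ j, |a j - a' j| ≤ r) → (∀ i j, |b i j - b' i j| ≤ r) →
          ‖projCLM (dirSpan n k b) - projCLM (dirSpan n k b')‖ +
              dist (basePt n k a b - projCLM (dirSpan n k b) (basePt n k a b))
                (basePt n k a' b' - projCLM (dirSpan n k b') (basePt n k a' b')) ≤
            K' * r := by
  have hkn' : k ≤ n := hkn.le
  set C : ℝ := k * Real.sqrt n with hCdef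
  have hn1 : (1:ℝ) ≤ n := by exact_mod_cast Nat.one_le_of_lt hkn
  have hsn : 1 ≤ Real.sqrt n := by
    rw [show (1:ℝ) = Real.sqrt 1 by simp]
    exact Real.sqrt_le_sqrt hn1
  have hsn0 : 0 < Real.sqrt n := lt_of_lt_of_le one_pos hsn
  have hC1 : 1 ≤ C := by
    have hk1 : (1:ℝ) ≤ k := by exact_mod_cast hk
    calc (1:ℝ) = 1 * 1 := by ring
      _ ≤ k * Real.sqrt n := mul_le_mul hk1 hsn zero_le_one (by linarith)
  have hC0 : 0 < C := lt_of_lt_of_le one_pos hC1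
  refine ⟨2*C^2 + 2*C^4 + Real.sqrt n * (1 + 3*C^2 + 2*C^4), by positivity, ?_⟩
  intro a a' b b' hH hH' r har hbr
  have hr0 : 0 ≤ r := le_trans (abs_nonneg _) (har ⟨0, by omega⟩)
  -- coordinate bounds
  have ha1 : ∀ j, |a j| ≤ 1 := fun j => by
    have := memH_a_bound a b hH j; rw [Set.mem_Icc] at this
    exact abs_le.mpr ⟨by linarith [this.1], this.2⟩
  have ha'1 : ∀ j, |a' j| ≤ 1 := fun j => by
    have := memH_a_bound a' b' hH' j; rw [Set.mem_Icc] at this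
    exact abs_le.mpr ⟨by linarith [this.1], this.2⟩
  have hb1 : ∀ i j, |b i j| ≤ 1 := fun i j => by
    have h1 := memH_a_bound a b hH j; rw [Set.mem_Icc] at h1
    have h2 := memH_ab_bound a b hH i j; rw [Set.mem_Icc] at h2
    exact abs_le.mpr ⟨by linarith [h1.2, h2.1], by linarith [h1.1, h2.2]⟩
  have hb'1 : ∀ i j, |b' i j| ≤ 1 := fun i j => by
    have h1 := memH_a_bound a' b' hH' j; rw [Set.mem_Icc] at h1
    have h2 := memH_ab_bound a' b' hH' i j; rw [Set.mem_Icc] at h2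
    exact abs_le.mpr ⟨by linarith [h1.2, h2.1], by linarith [h1.1, h2.2]⟩
  -- operator bounds
  have hBn : ‖Bclm n k b‖ ≤ C := norm_Bclm_le hb1
  have hB'n : ‖Bclm n k b'‖ ≤ C := norm_Bclm_le hb'1
  have hBd : ‖Bclm n k b - Bclm n k b'‖ ≤ C * r := norm_Bclm_sub_le hr0 hbr
  have hadj : ∀ (A : EuclideanSpace ℝ (Fin k) →L[ℝ] EuclideanSpace ℝ (Fin n)),
      ‖ContinuousLinearMap.adjoint A‖ = ‖A‖ := fun A =>
    LinearIsometryEquiv.norm_map ContinuousLinearMap.adjoint A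
  have hAn : ‖ContinuousLinearMap.adjoint (Bclm n k b)‖ ≤ C := by rw [hadj]; exact hBn
  have hA'n : ‖ContinuousLinearMap.adjoint (Bclm n k b')‖ ≤ C := by rw [hadj]; exact hB'n
  have hAd : ‖ContinuousLinearMap.adjoint (Bclm n k b)
      - ContinuousLinearMap.adjoint (Bclm n k b')‖ ≤ C * r := by
    have : ContinuousLinearMap.adjoint (Bclm n k b) - ContinuousLinearMap.adjoint (Bclm n k b')
        = ContinuousLinearMap.adjoint (Bclm n k b - Bclm n k b') := (map_sub _ _ _).symm
    rw [this, hadj]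
    exact hBd
  have hA'd : ‖ContinuousLinearMap.adjoint (Bclm n k b')
      - ContinuousLinearMap.adjoint (Bclm n k b)‖ ≤ C * r := by
    rw [norm_sub_rev]; exact hAd
  have hNn : ‖Nclm hkn' b‖ ≤ 1 := norm_Nclm_le hkn' b
  have hN'n : ‖Nclm hkn' b'‖ ≤ 1 := norm_Nclm_le hkn' b'
  have hB'd : ‖Bclm n k b' - Bclm n k b‖ ≤ C * r := by rw [norm_sub_rev]; exact hBd
  have hMd : ‖Mclm n k b' - Mclm n k b‖ ≤ 2 * (C^2 * r) := by
    rw [Mclm_sub]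
    calc ‖_ + _‖ ≤ ‖(ContinuousLinearMap.adjoint (Bclm n k b')
            - ContinuousLinearMap.adjoint (Bclm n k b)) ∘L Bclm n k b'‖
          + ‖(ContinuousLinearMap.adjoint (Bclm n k b)) ∘L (Bclm n k b' - Bclm n k b)‖ :=
        norm_add_le _ _
      _ ≤ (C * r) * C + C * (C * r) :=
        add_le_add (opnorm_comp_le' _ _ hA'd hB'n) (opnorm_comp_le' _ _ hAn hB'd)
      _ = 2 * (C^2 * r) := by ring
  have hNd : ‖Nclm hkn' b - Nclm hkn' b'‖ ≤ 2 * (C^2 * r) := by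
    rw [Nclm_sub hkn' b b']
    calc ‖_‖ ≤ 1 * ((2 * (C^2 * r)) * 1) :=
        opnorm_comp_le' _ _ hNn (opnorm_comp_le' _ _ hMd hN'n)
      _ = 2 * (C^2 * r) := by ring
  have hQd : ‖(Bclm n k b) ∘L (Nclm hkn' b) ∘L (ContinuousLinearMap.adjoint (Bclm n k b))
      - (Bclm n k b') ∘L (Nclm hkn' b') ∘L (ContinuousLinearMap.adjoint (Bclm n k b'))‖
      ≤ (2*C^2 + 2*C^4) * r := by
    rw [Q_sub hkn' b b']
    calc ‖_ + _ + _‖ ≤ ‖_ + _‖ + ‖_‖ := norm_add_le _ _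
      _ ≤ ‖(Bclm n k b - Bclm n k b') ∘L ((Nclm hkn' b)
              ∘L (ContinuousLinearMap.adjoint (Bclm n k b)))‖
          + ‖(Bclm n k b') ∘L ((Nclm hkn' b - Nclm hkn' b')
              ∘L (ContinuousLinearMap.adjoint (Bclm n k b)))‖
          + ‖((Bclm n k b') ∘L (Nclm hkn' b'))
              ∘L (ContinuousLinearMap.adjoint (Bclm n k b)
                  - ContinuousLinearMap.adjoint (Bclm n k b'))‖ := by
        gcongr
        exact norm_add_le _ _
      _ ≤ (C * r) * (1 * C) + C * ((2 * (C^2 * r)) * C) + (C * 1) * (C * r) := by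
        refine add_le_add (add_le_add ?_ ?_) ?_
        · exact opnorm_comp_le' _ _ hBd (opnorm_comp_le' _ _ hNn hAn)
        · exact opnorm_comp_le' _ _ hB'n (opnorm_comp_le' _ _ hNd hAn)
        · exact opnorm_comp_le' _ _ (opnorm_comp_le' _ _ hB'n hN'n) hAd
      _ = (2*C^2 + 2*C^4) * r := by ring
  -- base point bounds
  have hp : ‖basePt n k a b‖ ≤ Real.sqrt n := by
    rw [basePt_eq]
    have := norm_glue_le (u := (0 : Fin k → ℝ)) (v := a) (c := 1) zero_le_one
      (fun i => by simp) ha1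
    simpa using this
  have hpd : ‖basePt n k a b - basePt n k a' b'‖ ≤ Real.sqrt n * r := by
    rw [basePt_eq, basePt_eq, glue_sub]
    exact norm_glue_le hr0 (fun i => by simpa using hr0) (fun j => har j)
  -- assemble
  rw [proj_formula hkn' b, proj_formula hkn' b']
  set Q := (Bclm n k b) ∘L (Nclm hkn' b) ∘L (ContinuousLinearMap.adjoint (Bclm n k b)) with hQdef
  set Q' := (Bclm n k b') ∘L (Nclm hkn' b') ∘L (ContinuousLinearMap.adjoint (Bclm n k b'))
    with hQ'def
  have hQ'n : ‖Q'‖ ≤ C * (1 * C) :=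
    opnorm_comp_le' _ _ hB'n (opnorm_comp_le' _ _ hN'n hA'n)
  set p := basePt n k a b
  set p' := basePt n k a' b'
  have hsplit : Q p - Q' p' = (Q - Q') p + Q' (p - p') := by
    simp only [ContinuousLinearMap.sub_apply, map_sub]
    abel
  have hQp : ‖Q p - Q' p'‖ ≤ ((2*C^2 + 2*C^4) * r) * Real.sqrt n
      + (C * (1 * C)) * (Real.sqrt n * r) := by
    rw [hsplit]
    calc ‖(Q - Q') p + Q' (p - p')‖ ≤ ‖(Q - Q') p‖ + ‖Q' (p - p')‖ := norm_add_le _ _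
      _ ≤ ((2*C^2 + 2*C^4) * r) * Real.sqrt n + (C * (1 * C)) * (Real.sqrt n * r) := by
        refine add_le_add ?_ ?_
        · calc ‖(Q - Q') p‖ ≤ ‖Q - Q'‖ * ‖p‖ := ContinuousLinearMap.le_opNorm _ _
            _ ≤ ((2*C^2 + 2*C^4) * r) * Real.sqrt n :=
              mul_le_mul hQd hp (norm_nonneg _) (by positivity)
        · calc ‖Q' (p - p')‖ ≤ ‖Q'‖ * ‖p - p'‖ := ContinuousLinearMap.le_opNorm _ _
            _ ≤ (C * (1 * C)) * (Real.sqrt n * r) :=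
              mul_le_mul hQ'n hpd (norm_nonneg _) (by positivity)
  have hdist : dist (p - Q p) (p' - Q' p') ≤ Real.sqrt n * r
      + (((2*C^2 + 2*C^4) * r) * Real.sqrt n + (C * (1 * C)) * (Real.sqrt n * r)) := by
    rw [dist_eq_norm]
    calc ‖p - Q p - (p' - Q' p')‖ = ‖(p - p') - (Q p - Q' p')‖ := by congr 1; abel
      _ ≤ ‖p - p'‖ + ‖Q p - Q' p'‖ := norm_sub_le _ _
      _ ≤ _ := add_le_add hpd hQp
  have key : ‖Q - Q'‖ + dist (p - Q p) (p' - Q' p')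
      ≤ (2*C^2 + 2*C^4 + Real.sqrt n * (1 + 3*C^2 + 2*C^4)) * r := by
    have expand : (2*C^2 + 2*C^4 + Real.sqrt n * (1 + 3*C^2 + 2*C^4)) * r
        = (2*C^2 + 2*C^4) * r + (Real.sqrt n * r
          + (((2*C^2 + 2*C^4) * r) * Real.sqrt n + (C * (1 * C)) * (Real.sqrt n * r))) := by
      ring
    rw [expand]
    exact add_le_add hQd hdist
  exact key
end
end
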